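/- For any weights ω_1,...,ω_n and processing times given by p_{[j]} = a_{[j]} + b·Σ_{t=1}^{j−1}(1+b)^{t−1} a_{[j−t]}, one has Σ_{j=1}^n ω_j p_{[j]} = Σ_{j=1}^n W_j a_{[j]}, where W_j = ω_j + b·Σ_{t=j+1}^n ω_t (1+b)^{t−j−1}. -/

import Mathlib

/-- Exchanging the order of summation converts job-position weights `ω j` on
actual processing times into positional weights `W j` on normal processing
times. -/
theorem stmt_8 (n : ℕ) (a p ω W : ℕ → ℝ) (b : ℝ) (hb : 0 < b)
    (hp : ∀ j, 1 ≤ j → j ≤ n →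
      p j = a j + b * ∑ t ∈ Finset.Icc 1 (j - 1), (1 + b) ^ (t - 1) * a (j - t))
    (hW : ∀ j, 1 ≤ j → j ≤ n →
      W j = ω j + b * ∑ t ∈ Finset.Icc (j + 1) n, ω t * (1 + b) ^ (t - j - 1)) :
    ∑ j ∈ Finset.Icc 1 n, ω j * p j = ∑ j ∈ Finset.Icc 1 n, W j * a j := by
  have hL : ∑ j ∈ Finset.Icc 1 n, ω j * p j
      = ∑ j ∈ Finset.Icc 1 n, ω j * a j
        + b * ∑ j ∈ Finset.Icc 1 n, ∑ t ∈ Finset.Icc 1 (j - 1),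
            ω j * ((1 + b) ^ (t - 1) * a (j - t)) := by
    rw [Finset.mul_sum, ← Finset.sum_add_distrib]
    refine Finset.sum_congr rfl fun j hj => ?_
    rw [Finset.mem_Icc] at hj
    rw [hp j hj.1 hj.2, ← Finset.mul_sum]
    ring
  have hR : ∑ j ∈ Finset.Icc 1 n, W j * a j
      = ∑ j ∈ Finset.Icc 1 n, ω j * a j
        + b * ∑ j ∈ Finset.Icc 1 n, ∑ t ∈ Finset.Icc (j + 1) n,
            ω t * ((1 + b) ^ (t - j - 1) * a j) := by
    rw [Finset.mul_sum, ← Finset.sum_add_distrib]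
    refine Finset.sum_congr rfl fun j hj => ?_
    rw [Finset.mem_Icc] at hj
    rw [hW j hj.1 hj.2]
    simp only [← mul_assoc]
    rw [← Finset.sum_mul]
    ring
  rw [hL, hR]
  congr 1
  congr 1
  have hreflect : ∀ j ∈ Finset.Icc 1 n,
      ∑ t ∈ Finset.Icc 1 (j - 1), ω j * ((1 + b) ^ (t - 1) * a (j - t))
      = ∑ k ∈ Finset.Icc 1 (j - 1), ω j * ((1 + b) ^ (j - k - 1) * a k) := by
    intro j hj
    rw [Finset.mem_Icc] at hj
    obtain ⟨hj1, hj2⟩ := hj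
    refine Finset.sum_nbij' (fun t => j - t) (fun k => j - k) ?_ ?_ ?_ ?_ ?_
    · intro t ht; simp only [Finset.mem_Icc] at *; omega
    · intro k hk; simp only [Finset.mem_Icc] at *; omega
    · intro t ht; simp only [Finset.mem_Icc] at ht; show j - (j - t) = t; omega
    · intro k hk; simp only [Finset.mem_Icc] at hk; show j - (j - k) = k; omega
    · intro t ht
      simp only [Finset.mem_Icc] at ht
      have : j - (j - t) - 1 = t - 1 := by omega
      beta_reduce
      rw [this]
  rw [Finset.sum_congr rfl hreflect]
  rw [Finset.sum_comm' (t' := Finset.Icc 1 n) (s' := fun k => Finset.Icc (k + 1) n)]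
  intro x y
  simp only [Finset.mem_Icc]
  omega
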